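/- The symmetric decreasing rearrangement is non-expansive on nonnegative continuous compactly supported functions on ℝ: if f, g are nonnegative continuous functions with compact support on ℝ and f*, g* denote their symmetric decreasing rearrangements, then sup_x |f*(x) − g*(x)| ≤ sup_x |f(x) − g(x)|. -/

import Mathlib

open MeasureTheory

/-- The symmetric decreasing rearrangement on ℝ, via the layer-cake formula:
f*(x) = ∫₀^∞ 1_{2|x| < |{f > t}|} dt. -/
noncomputable def sdr (f : ℝ → ℝ) (x : ℝ) : ℝ :=
  ∫ t in Set.Ioi (0:ℝ),
    if 2 * |x| < (volume {y : ℝ | t < f y}).toReal then (1:ℝ) else 0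

namespace SdrAux

open Set

/-- Superlevel set region used to compute `sdr`. -/
def S (f : ℝ → ℝ) (x : ℝ) : Set ℝ :=
  {t : ℝ | 0 < t ∧ 2 * |x| < (volume {y : ℝ | t < f y}).toReal}

lemma level_subset_tsupport (f : ℝ → ℝ) {t : ℝ} (ht : 0 < t) :
    {y : ℝ | t < f y} ⊆ tsupport f := by
  intro y hy
  apply subset_tsupport
  simp only [Function.mem_support]
  intro h0
  simp only [mem_setOf_eq, h0] at hy
  exact absurd hy (not_lt.2 ht.le)

lemma level_fin (f : ℝ → ℝ) (hfs : HasCompactSupport f) {t : ℝ} (ht : 0 < t) :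
    volume {y : ℝ | t < f y} ≠ ⊤ :=
  ne_top_of_le_ne_top (hfs.measure_lt_top.ne) (measure_mono (level_subset_tsupport f ht))

lemma m_anti (f : ℝ → ℝ) (hfs : HasCompactSupport f) {s t : ℝ} (hs : 0 < s) (hst : s ≤ t) :
    (volume {y : ℝ | t < f y}).toReal ≤ (volume {y : ℝ | s < f y}).toReal := by
  apply ENNReal.toReal_mono (level_fin f hfs hs)
  exact measure_mono fun y hy => lt_of_le_of_lt hst hy

lemma S_measurable (f : ℝ → ℝ) (hfs : HasCompactSupport f) (x : ℝ) :
    MeasurableSet (S f x) := by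
  apply Set.OrdConnected.measurableSet
  constructor
  intro a ha b hb t ht
  refine ⟨lt_of_lt_of_le ha.1 ht.1, lt_of_lt_of_le hb.2 ?_⟩
  exact m_anti f hfs (lt_of_lt_of_le ha.1 ht.1) ht.2

lemma S_subset_Ioc (f : ℝ → ℝ) (x : ℝ) {C : ℝ} (hC : ∀ y, f y ≤ C) :
    S f x ⊆ Ioc 0 C := by
  intro t ht
  obtain ⟨ht1, ht2⟩ := ht
  refine ⟨ht1, ?_⟩
  by_contra h
  push_neg at h
  have hemp : {y : ℝ | t < f y} = ∅ := by
    ext y; simp only [mem_setOf_eq, mem_empty_iff_false, iff_false, not_lt]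
    exact (hC y).trans h.le
  rw [hemp] at ht2
  simp at ht2
  exact absurd ht2 (not_lt.2 (by positivity))

lemma exists_bound (f : ℝ → ℝ) (hfc : Continuous f) (hfs : HasCompactSupport f) :
    ∃ C : ℝ, ∀ y, f y ≤ C := by
  obtain ⟨C, hC⟩ := hfc.bounded_above_of_compact_support hfs
  exact ⟨C, fun y => le_trans (le_abs_self _) (by simpa [Real.norm_eq_abs] using hC y)⟩

lemma sdr_eq (f : ℝ → ℝ) (hfc : Continuous f) (hfs : HasCompactSupport f) (x : ℝ) :
    sdr f x = (volume (S f x)).toReal := by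
  have hS : MeasurableSet (S f x) := S_measurable f hfs x
  have h1 : sdr f x = ∫ t in Ioi (0:ℝ), (S f x).indicator (fun _ => (1:ℝ)) t := by
    apply setIntegral_congr_fun measurableSet_Ioi
    intro t ht
    by_cases h : 2 * |x| < (volume {y : ℝ | t < f y}).toReal
    · simp [h, indicator, S, ht, mem_Ioi.mp ht]
    · simp [h, indicator, S]
  rw [h1, setIntegral_indicator hS, setIntegral_const]
  have hsub : S f x ∩ Ioi 0 = S f x := by
    apply inter_eq_self_of_subset_left
    intro t ht; exact ht.1
  rw [inter_comm, hsub]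
  simp
  rfl

lemma sdr_sub_le (f g : ℝ → ℝ)
    (hfc : Continuous f) (hfs : HasCompactSupport f)
    (hgc : Continuous g) (hgs : HasCompactSupport g) (x : ℝ) :
    sdr f x - sdr g x ≤ ⨆ y, |f y - g y| := by
  set M := ⨆ y, |f y - g y| with hM
  have hbdd : BddAbove (Set.range fun y => |f y - g y|) := by
    apply Continuous.bddAbove_range_of_hasCompactSupport
    · exact (hfc.sub hgc).abs
    · apply HasCompactSupport.intro (hfs.union hgs)
      intro y hy
      rw [Set.mem_union] at hy
      push_neg at hy
      rw [image_eq_zero_of_notMem_tsupport hy.1, image_eq_zero_of_notMem_tsupport hy.2]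
      simp
  have hle : ∀ y, |f y - g y| ≤ M := fun y => le_ciSup hbdd y
  have hM0 : 0 ≤ M := le_trans (abs_nonneg _) (hle 0)
  -- key set inclusion
  have hincl : S f x ⊆ Ioc 0 M ∪ (fun t => t - M) ⁻¹' S g x := by
    intro t ht
    by_cases hcase : t ≤ M
    · exact Or.inl ⟨ht.1, hcase⟩
    · push_neg at hcase
      right
      have htM : 0 < t - M := sub_pos.2 hcase
      refine ⟨htM, lt_of_lt_of_le ht.2 ?_⟩
      apply ENNReal.toReal_mono (level_fin g hgs htM)
      apply measure_mono
      intro y hy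
      have : f y - g y ≤ M := le_trans (le_abs_self _) (hle y)
      simp only [mem_setOf_eq] at hy ⊢
      linarith
  have hvol : volume (S f x) ≤ ENNReal.ofReal M + volume (S g x) := by
    calc volume (S f x) ≤ volume (Ioc 0 M ∪ (fun t => t - M) ⁻¹' S g x) := measure_mono hincl
      _ ≤ volume (Ioc 0 M) + volume ((fun t => t - M) ⁻¹' S g x) := measure_union_le _ _
      _ = ENNReal.ofReal M + volume (S g x) := by
          rw [Real.volume_Ioc, sub_zero]
          congr 1
          have : (fun t : ℝ => t - M) = fun t => t + (-M) := by ext t; ring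
          rw [this, measure_preimage_add_right]
  obtain ⟨Cf, hCf⟩ := exists_bound f hfc hfs
  have hfin : volume (S f x) ≠ ⊤ :=
    ne_top_of_le_ne_top (by rw [Real.volume_Ioc]; exact ENNReal.ofReal_ne_top)
      (measure_mono (S_subset_Ioc f x hCf))
  obtain ⟨Cg, hCg⟩ := exists_bound g hgc hgs
  have hgfin : volume (S g x) ≠ ⊤ :=
    ne_top_of_le_ne_top (by rw [Real.volume_Ioc]; exact ENNReal.ofReal_ne_top)
      (measure_mono (S_subset_Ioc g x hCg))
  rw [sdr_eq f hfc hfs x, sdr_eq g hgc hgs x]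
  have := ENNReal.toReal_mono (by finiteness) hvol
  rw [ENNReal.toReal_add ENNReal.ofReal_ne_top hgfin, ENNReal.toReal_ofReal hM0] at this
  linarith

end SdrAux

theorem sdr_nonexpansive (f g : ℝ → ℝ)
    (hfc : Continuous f) (hfs : HasCompactSupport f) (hf0 : ∀ x, 0 ≤ f x)
    (hgc : Continuous g) (hgs : HasCompactSupport g) (hg0 : ∀ x, 0 ≤ g x) :
    ∀ x, |sdr f x - sdr g x| ≤ ⨆ y, |f y - g y| := by
  intro x
  rw [abs_sub_le_iff]
  refine ⟨SdrAux.sdr_sub_le f g hfc hfs hgc hgs x, ?_⟩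
  have h := SdrAux.sdr_sub_le g f hgc hgs hfc hfs x
  have : (⨆ y, |g y - f y|) = ⨆ y, |f y - g y| := by
    congr 1; ext y; rw [abs_sub_comm]
  linarith [this ▸ h]
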